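/- arXiv:1911.05910 — 2 statements merged into one kernel-verified Lean document; each statement's English description precedes it below -/
import Mathlib

section
/- For every real x ≥ x_G, the set 𝒰(x) is the singleton {q_x}. -/
open scoped ENNReal NNReal Classical

namespace Expansions

/-- Digit sequences over the alphabet `{0,1,…,M}`; index `i : ℕ` represents the
`(i+1)`-st digit `d_{i+1}` of the paper. -/
abbrev Digits (M : ℕ) := ℕ → Fin (M + 1)

/-- `π_q((d_i)) = Σ_{i≥1} d_i / q^i`. -/
noncomputable def piQ (M : ℕ) (q : ℝ) (d : Digits M) : ℝ :=
  ∑' i : ℕ, (d i : ℝ) / q ^ (i + 1)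

/-- `𝒰_q` : the set of real numbers having a unique `q`-expansion. -/
def Uq (M : ℕ) (q : ℝ) : Set ℝ := {x | ∃! d : Digits M, piQ M q d = x}

/-- `𝐔_q` : the set of sequences that are the unique `q`-expansion of their value. -/
def UqSym (M : ℕ) (q : ℝ) : Set (Digits M) :=
  {d | ∀ e : Digits M, piQ M q e = piQ M q d → e = d}

/-- `𝒰(x)` : the set of univoque bases of `x`. -/
def Ubases (M : ℕ) (x : ℝ) : Set ℝ :=
  {q | q ∈ Set.Ioc (1 : ℝ) ((M : ℝ) + 1) ∧ x ∈ Uq M q}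

/-- `q_x = min{M+1, 1+M/x}`. -/
noncomputable def qx (M : ℕ) (x : ℝ) : ℝ := min ((M : ℝ) + 1) (1 + (M : ℝ) / x)

/-- Strict lexicographic order on digit sequences. -/
def lexLt {M : ℕ} (c d : Digits M) : Prop := ∃ n, (∀ i < n, c i = d i) ∧ c n < d n

def lexLe {M : ℕ} (c d : Digits M) : Prop := c = d ∨ lexLt c d

/-- The sequence ends with `0^∞`. -/
def EndsInZero {M : ℕ} (d : Digits M) : Prop := ∃ N, ∀ n ≥ N, d n = 0

/-- `d` is the quasi-greedy `q`-expansion of `x`: the lexicographically largest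
`q`-expansion of `x` not ending with `0^∞`. -/
def IsQuasiGreedy (M : ℕ) (q x : ℝ) (d : Digits M) : Prop :=
  piQ M q d = x ∧ ¬ EndsInZero d ∧
    ∀ e : Digits M, piQ M q e = x → ¬ EndsInZero e → lexLe e d

/-- `Φ_x(q)`: the quasi-greedy `q`-expansion of `x` (junk value if none exists). -/
noncomputable def Phi (M : ℕ) (x q : ℝ) : Digits M :=
  if h : ∃ d : Digits M, IsQuasiGreedy M q x d then h.choose else fun _ => 0

/-- `𝐔(x) = {Φ_x(q) : q ∈ 𝒰(x)}`. -/
def UxSym (M : ℕ) (x : ℝ) : Set (Digits M) := (Phi M x) '' (Ubases M x)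

/-- `ρ((c_i),(d_i)) = (M+1)^{-inf{i ≥ 1 : c_i ≠ d_i}}` (our index `n` represents the
`(n+1)`-st digit, whence the exponent `-(n+1)`); `ρ(c,c) = 0`. -/
noncomputable def rho (M : ℕ) (c d : Digits M) : ℝ :=
  if c = d then 0
  else ((M : ℝ) + 1) ^ (-(((sInf {i | c i ≠ d i} : ℕ) : ℤ) + 1))

/-- Diameter of a set with respect to a distance function, valued in `ℝ≥0∞`. -/
noncomputable def gdiam {X : Type*} (dist : X → X → ℝ) (A : Set X) : ℝ≥0∞ :=
  ⨆ x ∈ A, ⨆ y ∈ A, ENNReal.ofReal (dist x y)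

/-- The `s`-dimensional Hausdorff outer measure with respect to a distance function:
`lim_{δ→0⁺} inf {Σ diam(C n)^s : A ⊆ ⋃ C n, diam (C n) ≤ δ}`. -/
noncomputable def gHMeasure {X : Type*} (dist : X → X → ℝ) (s : ℝ) (A : Set X) : ℝ≥0∞ :=
  ⨆ (δ : ℝ) (_ : 0 < δ),
    ⨅ (C : ℕ → Set X) (_ : A ⊆ ⋃ n, C n)
      (_ : ∀ n, gdiam dist (C n) ≤ ENNReal.ofReal δ),
      ∑' n, gdiam dist (C n) ^ s

/-- Hausdorff dimension with respect to a distance function. -/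
noncomputable def gdimH {X : Type*} (dist : X → X → ℝ) (A : Set X) : ℝ≥0∞ :=
  ⨆ (s : ℝ≥0) (_ : gHMeasure dist (s : ℝ) A = ⊤), (s : ℝ≥0∞)

/-- The generalized golden ratio `q_G`. -/
noncomputable def qG (M : ℕ) : ℝ :=
  if M % 2 = 0 then ((M / 2 : ℕ) : ℝ) + 1
  else (((M / 2 : ℕ) : ℝ) + 1 +
    Real.sqrt (((M / 2 : ℕ) : ℝ) ^ 2 + 6 * ((M / 2 : ℕ) : ℝ) + 5)) / 2

/-- `x_G = M/(q_G - 1)`. -/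
noncomputable def xG (M : ℕ) : ℝ := (M : ℝ) / (qG M - 1)

/-- The Komornik–Loreti constant `q_KL = min 𝒰(1)`. -/
noncomputable def qKL (M : ℕ) : ℝ := sInf (Ubases M 1)

/-- `x_KL = M/(q_KL - 1)`. -/
noncomputable def xKL (M : ℕ) : ℝ := (M : ℝ) / (qKL M - 1)

/-- `X_iso`: the set of `x > 0` such that `𝒰(x)` contains an isolated point. -/
def Xiso (M : ℕ) : Set ℝ :=
  {x | 0 < x ∧ ∃ q ∈ Ubases M x, ∃ ε > 0, Ubases M x ∩ Set.Ioo (q - ε) (q + ε) = {q}}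

/-- The bifurcation set `𝒱 = {q ∈ (1,M+1] : 𝐔_r ≠ 𝐔_q for all r > q}`. -/
def Vset (M : ℕ) : Set ℝ :=
  {q | q ∈ Set.Ioc (1 : ℝ) ((M : ℝ) + 1) ∧
    ∀ r ∈ Set.Ioc (1 : ℝ) ((M : ℝ) + 1), q < r → UqSym M r ≠ UqSym M q}

/-- The Thue–Morse sequence `τ_i` = parity of the binary digit sum of `i`. -/
def tm (i : ℕ) : ℕ := (Nat.digits 2 i).sum % 2


section Aux

variable {M : ℕ} {q : ℝ}

/-- The tail (shift by `n`) of a digit sequence. -/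
def tail (n : ℕ) (d : Digits M) : Digits M := fun i => d (i + n)

lemma digit_nonneg (d : Digits M) (i : ℕ) : (0:ℝ) ≤ (d i : ℕ) := by positivity

lemma digit_le (d : Digits M) (i : ℕ) : ((d i : ℕ) : ℝ) ≤ M := by
  exact_mod_cast Nat.lt_succ_iff.1 (d i).isLt

lemma summable_geom_aux (hq : 1 < q) :
    Summable (fun i : ℕ => (M:ℝ) * (1/q) ^ (i+1)) := by
  have h : Summable (fun i : ℕ => (1/q) ^ i) := by
    apply summable_geometric_of_lt_one (by positivity)
    rw [div_lt_one (by linarith)]; linarith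
  exact ((h.mul_left (1/q)).mul_left (M:ℝ)).congr (by intro i; ring)

lemma tsum_geom_aux (hq : 1 < q) :
    ∑' i : ℕ, (M:ℝ) * (1/q) ^ (i+1) = M / (q-1) := by
  have h0 : (0:ℝ) ≤ 1/q := by positivity
  have h1 : (1:ℝ)/q < 1 := by rw [div_lt_one (by linarith)]; linarith
  have h : Summable (fun i : ℕ => (1/q) ^ i) := summable_geometric_of_lt_one h0 h1
  have := tsum_geometric_of_lt_one h0 h1
  calc ∑' i : ℕ, (M:ℝ) * (1/q) ^ (i+1)
      = ∑' i : ℕ, ((M:ℝ) * (1/q)) * (1/q) ^ i := by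
        apply tsum_congr; intro i; ring
    _ = ((M:ℝ) * (1/q)) * ∑' i : ℕ, (1/q) ^ i := by rw [tsum_mul_left]
    _ = M / (q-1) := by
        rw [this]
        have hq0 : q ≠ 0 := by intro h'; linarith
        have hne : q - 1 ≠ 0 := by intro h'; linarith
        field_simp

lemma piQ_term_le (hq : 1 < q) (d : Digits M) (i : ℕ) :
    (d i : ℝ) / q ^ (i+1) ≤ (M:ℝ) * (1/q) ^ (i+1) := by
  have hqpos : (0:ℝ) < q := by linarith
  rw [div_pow, one_pow, mul_div_assoc', mul_one]
  apply div_le_div_of_nonneg_right ?_ (by positivity)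
  · exact digit_le d i
  
lemma summable_piQ (hq : 1 < q) (d : Digits M) :
    Summable (fun i : ℕ => (d i : ℝ) / q ^ (i+1)) := by
  apply Summable.of_nonneg_of_le (fun i => by positivity) (piQ_term_le hq d)
    (summable_geom_aux hq)

lemma piQ_nonneg (hq : 1 < q) (d : Digits M) : 0 ≤ piQ M q d :=
  tsum_nonneg (fun i => by positivity)

lemma piQ_le (hq : 1 < q) (d : Digits M) : piQ M q d ≤ M / (q-1) := by
  rw [← tsum_geom_aux hq]
  exact Summable.tsum_le_tsum (piQ_term_le hq d) (summable_piQ hq d) (summable_geom_aux hq)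

lemma piQ_constM (hq : 1 < q) :
    piQ M q (fun _ => (⟨M, Nat.lt_succ_self M⟩ : Fin (M+1))) = M / (q-1) := by
  rw [← tsum_geom_aux hq]
  apply tsum_congr; intro i
  have hqpos : (0:ℝ) < q := by linarith
  rw [div_pow, one_pow, mul_div_assoc', mul_one]

lemma piQ_zero (hq : 1 < q) :
    piQ M q (fun _ => (0 : Fin (M+1))) = 0 := by
  unfold piQ
  convert tsum_zero with i
  norm_num

lemma piQ_rec (hq : 1 < q) (d : Digits M) :
    q * piQ M q d = d 0 + piQ M q (tail 1 d) := by
  have hqpos : (0:ℝ) < q := by linarith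
  have h := Summable.tsum_eq_zero_add (summable_piQ hq d)
  unfold piQ at *
  rw [h]
  have : ∑' i : ℕ, (d (i+1) : ℝ) / q ^ (i + 1 + 1)
      = (∑' i : ℕ, (tail 1 d i : ℝ) / q ^ (i+1)) * (1/q) := by
    rw [← tsum_mul_right]
    apply tsum_congr; intro i
    unfold tail
    rw [pow_succ]
    field_simp
  rw [this]
  field_simp
  ring

lemma tail_zero (d : Digits M) : tail 0 d = d := rfl

lemma tail_tail (n : ℕ) (d : Digits M) : tail 1 (tail n d) = tail (n+1) d := by
  funext i; unfold tail; congr 1; omega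

lemma piQ_rec' (hq : 1 < q) (d : Digits M) :
    piQ M q d = ((d 0 : ℝ) + piQ M q (tail 1 d)) / q := by
  have hq0 : q ≠ 0 := by intro h'; simp [h'] at hq; linarith
  rw [eq_div_iff hq0, mul_comm, piQ_rec hq]

lemma piQ_partial (hq : 1 < q) (d : Digits M) (n : ℕ) :
    piQ M q d = (∑ i ∈ Finset.range n, (d i : ℝ)/q^(i+1)) + piQ M q (tail n d) / q^n := by
  have hq0 : q ≠ 0 := by intro h'; linarith
  induction n with
  | zero => simp [tail_zero]
  | succ n ih =>
    have h0 : ((tail n d) 0 : ℝ) = d n := by simp [tail]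
    have h2 : piQ M q (tail n d) = ((d n : ℝ) + piQ M q (tail (n+1) d)) / q := by
      rw [piQ_rec' hq (tail n d), tail_tail, h0]
    rw [ih, Finset.sum_range_succ, h2]
    have hqn : q^n ≠ 0 := pow_ne_zero _ hq0
    field_simp
    ring

lemma piQ_lt_constM (hq : 1 < q) (d : Digits M) (i₀ : ℕ) (hi : (d i₀ : ℕ) < M) :
    piQ M q d < M / (q-1) := by
  rw [← tsum_geom_aux hq]
  apply Summable.tsum_lt_tsum (piQ_term_le hq d) (i := i₀) ?_ (summable_piQ hq d)
    (summable_geom_aux hq)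
  have hqp : (0:ℝ) < q^(i₀+1) := by positivity
  rw [div_pow, one_pow, mul_div_assoc', mul_one]
  rw [div_lt_div_iff_of_pos_right hqp]
  exact_mod_cast hi

lemma exists_expansion (hq : 1 < q) (hqM : q ≤ M + 1) {t : ℝ}
    (ht0 : 0 ≤ t) (htS : t ≤ M/(q-1)) :
    ∃ d : Digits M, piQ M q d = t := by
  have hq0 : (0:ℝ) < q := lt_trans one_pos hq
  have hq1 : q - 1 > 0 := by linarith
  have hS1 : (1:ℝ) ≤ (M:ℝ)/(q-1) := by rw [le_div_iff₀ hq1]; linarith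
  have hqS : q * ((M:ℝ)/(q-1)) - M = (M:ℝ)/(q-1) := by field_simp; ring
  set S : ℝ := (M:ℝ)/(q-1) with hS
  let r : ℕ → ℝ := fun n => Nat.rec t (fun _ y => q * y - (min M ⌊q*y⌋₊ : ℕ)) n
  have hr0 : r 0 = t := rfl
  have hrs : ∀ n, r (n+1) = q * r n - (min M ⌊q * r n⌋₊ : ℕ) := fun n => rfl
  have hinv : ∀ n, 0 ≤ r n ∧ r n ≤ S := by
    intro n
    induction n with
    | zero => exact ⟨ht0, htS⟩
    | succ n ih =>
      obtain ⟨h1, h2⟩ := ih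
      have hfl : ((min M ⌊q * r n⌋₊ : ℕ) : ℝ) ≤ q * r n := by
        calc ((min M ⌊q * r n⌋₊ : ℕ) : ℝ) ≤ (⌊q * r n⌋₊ : ℝ) := by
              exact_mod_cast Nat.cast_le.2 (min_le_right _ _)
          _ ≤ q * r n := Nat.floor_le (by positivity)
      constructor
      · rw [hrs n]; linarith
      · rw [hrs n]
        rcases le_or_gt (⌊q * r n⌋₊) M with h | h
        · rw [min_eq_right h]
          have := Nat.lt_floor_add_one (q * r n)
          linarith
        · rw [min_eq_left (le_of_lt h)]
          have : q * r n ≤ q * S := by nlinarith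
          linarith
  let e : Digits M := fun n => ⟨min M ⌊q * r n⌋₊, Nat.lt_succ_iff.2 (min_le_left _ _)⟩
  have hpart : ∀ n, (∑ i ∈ Finset.range n, (e i : ℝ)/q^(i+1)) = t - r n / q^n := by
    intro n
    induction n with
    | zero => simp [hr0]
    | succ n ih =>
      have he : ((e n : ℕ) : ℝ) = ((min M ⌊q * r n⌋₊ : ℕ) : ℝ) := rfl
      have hqn : q^n ≠ 0 := pow_ne_zero _ (ne_of_gt hq0)
      have hqn1 : q^(n+1) ≠ 0 := pow_ne_zero _ (ne_of_gt hq0)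
      rw [Finset.sum_range_succ, ih, he, hrs n, pow_succ]
      field_simp
      ring
  refine ⟨e, ?_⟩
  have hsum : HasSum (fun i => (e i : ℝ)/q^(i+1)) t := by
    rw [(summable_piQ hq e).hasSum_iff_tendsto_nat]
    have h1 : Filter.Tendsto (fun n => r n / q^n) Filter.atTop (nhds 0) := by
      have hle : ∀ n : ℕ, r n / q^n ≤ S * (1/q)^n := by
        intro n
        rw [div_pow, one_pow, mul_div_assoc', mul_one,
          div_le_div_iff₀ (by positivity) (by positivity)]
        nlinarith [(hinv n).2, pow_pos hq0 n]
      have hg : Filter.Tendsto (fun n : ℕ => S * (1/q)^n) Filter.atTop (nhds 0) := by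
        rw [← mul_zero S]
        apply Filter.Tendsto.const_mul
        apply tendsto_pow_atTop_nhds_zero_of_lt_one (by positivity)
        rw [div_lt_one hq0]; linarith
      exact squeeze_zero (fun n => div_nonneg (hinv n).1 (by positivity)) hle hg
    have h2 : Filter.Tendsto (fun n => t - r n / q^n) Filter.atTop (nhds t) := by
      simpa using Filter.Tendsto.const_sub t h1
    exact h2.congr (fun n => (hpart n).symm)
  exact hsum.tsum_eq

lemma qG_arith (hM : 0 < M) (hq1 : 1 < q) (hqG : q < qG M) :
    q*q < M*q + 1 ∧ 2*q*q - q - 1 < M*(q+1) ∧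
      ∀ c : ℕ, 0 < c → c < M → ¬(((M:ℝ) - q + 1 < c) ∧ ((c:ℝ) < q - 1)) := by
  set k := M / 2 with hk
  have hk0 : (0:ℝ) ≤ (k:ℝ) := Nat.cast_nonneg _
  rcases Nat.even_or_odd M with he | ho
  · have hM2 : M % 2 = 0 := Nat.even_iff.1 he
    have hMk : (M:ℝ) = 2*(k:ℝ) := by
      have h : M = 2*k := by omega
      rw [h]; push_cast; ring
    have hk1 : (1:ℝ) ≤ (k:ℝ) := by
      have : 1 ≤ k := by omega
      exact_mod_cast this
    simp only [qG] at hqG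
    rw [if_pos hM2, ← hk] at hqG
    refine ⟨by nlinarith, by nlinarith, ?_⟩
    rintro c hc0 hcM ⟨h1, h2⟩
    have hck : (c:ℝ) < (k:ℝ) := by linarith
    have hc1 : c < k := by exact_mod_cast hck
    have hkc : (k:ℝ) < (c:ℝ) := by linarith
    have : k < c := by exact_mod_cast hkc
    omega
  · have hM2 : ¬(M % 2 = 0) := by
      have := Nat.odd_iff.1 ho; omega
    have hMk : (M:ℝ) = 2*(k:ℝ)+1 := by
      have h : M = 2*k+1 := by omega
      rw [h]; push_cast; ring
    have hs0 : 0 ≤ Real.sqrt ((k:ℝ)^2+6*(k:ℝ)+5) := Real.sqrt_nonneg _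
    have hs2 : (Real.sqrt ((k:ℝ)^2+6*(k:ℝ)+5))^2 = (k:ℝ)^2+6*(k:ℝ)+5 :=
      Real.sq_sqrt (by positivity)
    set s := Real.sqrt ((k:ℝ)^2+6*(k:ℝ)+5) with hsdef
    have hsk : s < (k:ℝ)+3 := by
      rw [hsdef]
      rw [show (k:ℝ)^2+6*(k:ℝ)+5 = ((k:ℝ)^2+6*(k:ℝ)+5) from rfl]
      apply (Real.sqrt_lt' (by positivity)).2
      nlinarith
    simp only [qG] at hqG
    rw [if_neg hM2, ← hk] at hqG
    rw [show (((k:ℕ):ℝ)^2 + 6*((k:ℕ):ℝ) + 5) = ((k:ℝ)^2+6*(k:ℝ)+5) from rfl, ← hsdef] at hqG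
    have hq : 2*q - (k:ℝ) - 1 < s := by linarith
    have hkey : q*q < ((k:ℝ)+1)*(q+1) := by
      rcases le_or_gt (2*q - (k:ℝ) - 1) 0 with h | h
      · nlinarith
      · have h2 : (2*q - (k:ℝ) - 1)*(2*q-(k:ℝ)-1) < s*s :=
          mul_lt_mul'' hq hq h.le h.le
        nlinarith [hs2]
    have hqk2 : q < (k:ℝ)+2 := by linarith
    refine ⟨by nlinarith, by nlinarith, ?_⟩
    rintro c hc0 hcM ⟨h1, h2⟩
    have hck : (c:ℝ) < (k:ℝ)+1 := by linarith
    have hc1 : c < k+1 := by exact_mod_cast hck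
    have hkc : (k:ℝ) < (c:ℝ) := by linarith
    have : k < c := by exact_mod_cast hkc
    omega

lemma qG_gt_one (hM : 0 < M) : 1 < qG M := by
  set k := M / 2 with hk
  rcases Nat.even_or_odd M with he | ho
  · have hM2 : M % 2 = 0 := Nat.even_iff.1 he
    have hk1 : 1 ≤ k := by omega
    simp only [qG]; rw [if_pos hM2, ← hk]
    have : (1:ℝ) ≤ (k:ℝ) := by exact_mod_cast hk1
    linarith
  · have hM2 : ¬(M % 2 = 0) := by have := Nat.odd_iff.1 ho; omega
    simp only [qG]; rw [if_neg hM2, ← hk]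
    have hk0 : (0:ℝ) ≤ (k:ℝ) := Nat.cast_nonneg _
    have hs0 : 0 ≤ Real.sqrt ((k:ℝ)^2+6*(k:ℝ)+5) := Real.sqrt_nonneg _
    have hs2 : (Real.sqrt ((k:ℝ)^2+6*(k:ℝ)+5))^2 = (k:ℝ)^2+6*(k:ℝ)+5 :=
      Real.sq_sqrt (by positivity)
    set s := Real.sqrt ((k:ℝ)^2+6*(k:ℝ)+5) with hsdef
    have : 1 < s := by nlinarith
    linarith

lemma qG_lt_M1 (hM : 0 < M) : qG M < M + 1 := by
  set k := M / 2 with hk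
  rcases Nat.even_or_odd M with he | ho
  · have hM2 : M % 2 = 0 := Nat.even_iff.1 he
    have hMk : (M:ℝ) = 2*(k:ℝ) := by
      have h : M = 2*k := by omega
      rw [h]; push_cast; ring
    have hk1 : (1:ℝ) ≤ (k:ℝ) := by
      have : 1 ≤ k := by omega
      exact_mod_cast this
    simp only [qG]; rw [if_pos hM2, ← hk]
    linarith
  · have hM2 : ¬(M % 2 = 0) := by have := Nat.odd_iff.1 ho; omega
    have hMk : (M:ℝ) = 2*(k:ℝ)+1 := by
      have h : M = 2*k+1 := by omega
      rw [h]; push_cast; ring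
    have hk0 : (0:ℝ) ≤ (k:ℝ) := Nat.cast_nonneg _
    have hs0 : 0 ≤ Real.sqrt ((k:ℝ)^2+6*(k:ℝ)+5) := Real.sqrt_nonneg _
    have hs2 : (Real.sqrt ((k:ℝ)^2+6*(k:ℝ)+5))^2 = (k:ℝ)^2+6*(k:ℝ)+5 :=
      Real.sq_sqrt (by positivity)
    set s := Real.sqrt ((k:ℝ)^2+6*(k:ℝ)+5) with hsdef
    have hsk : s < (k:ℝ)+3 := by
      rw [hsdef]
      apply (Real.sqrt_lt' (by positivity)).2
      nlinarith
    simp only [qG]; rw [if_neg hM2, ← hk]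
    rw [show (((k:ℕ):ℝ)^2 + 6*((k:ℕ):ℝ) + 5) = ((k:ℝ)^2+6*(k:ℝ)+5) from rfl, ← hsdef]
    linarith

lemma xG_gt_one (hM : 0 < M) : 1 < xG M := by
  have h1 := qG_gt_one (M := M) hM
  have h2 := qG_lt_M1 (M := M) hM
  rw [xG, lt_div_iff₀ (by linarith)]
  linarith

set_option maxHeartbeats 1000000 in
lemma no_unique_expansion (hM : 0 < M) (hq1 : 1 < q) (hqG : q < qG M)
    {x : ℝ} (hx0 : 0 < x) (hxS : x < M/(q-1)) : ¬ (∃! d : Digits M, piQ M q d = x) := by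
  have hqM : q ≤ (M:ℝ) + 1 := le_of_lt (lt_trans hqG (qG_lt_M1 hM))
  have hqM' : q < (M:ℝ) + 1 := lt_trans hqG (qG_lt_M1 hM)
  rintro ⟨d, hd, hun⟩
  obtain ⟨ineqA, ineqB, ineqC⟩ := qG_arith hM hq1 hqG
  have hq0 : (0:ℝ) < q := by linarith
  have hq1' : (0:ℝ) < q - 1 := by linarith
  have hS1' : 1 < (M:ℝ)/(q-1) := by rw [lt_div_iff₀ hq1']; linarith
  obtain ⟨S, hS⟩ : ∃ S : ℝ, S = (M:ℝ)/(q-1) := ⟨_, rfl⟩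
  have hS1 : 1 < S := by rw [hS]; exact hS1'
  have hxS' : x < S := by rw [hS]; exact hxS
  -- key inequalities
  have hA : 1 < q * (S - 1) := by
    have h2 : q * ((M:ℝ)/(q-1) - 1) - 1 = ((M:ℝ)*q + 1 - q*q)/(q-1) := by
      field_simp; ring
    have h3 : 0 < ((M:ℝ)*q + 1 - q*q)/(q-1) := div_pos (by linarith) hq1'
    rw [hS]; linarith
  have hA2 : q < S + M - 1 := by
    have h2 : ((M:ℝ)/(q-1) + M - 1) - q = ((M:ℝ)*q + 1 - q*q)/(q-1) := by
      field_simp; ring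
    have h3 : 0 < ((M:ℝ)*q + 1 - q*q)/(q-1) := div_pos (by linarith) hq1'
    rw [hS]; linarith
  have hB : 2*q + 2 - S*(q+1) < 1 := by
    have h2 : ((M:ℝ)/(q-1))*(q+1) - (2*q+1) = ((M:ℝ)*(q+1) - (2*q*q - q - 1))/(q-1) := by
      field_simp; ring
    have h3 : 0 < ((M:ℝ)*(q+1) - (2*q*q - q - 1))/(q-1) := div_pos (by linarith) hq1'
    rw [hS]; linarith
  -- the orbit
  obtain ⟨y, hyrec, hyb, hpart0, hyzero, hyconst⟩ :
      ∃ y : ℕ → ℝ,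
        (∀ n, q * y n = ((d n : ℕ) : ℝ) + y (n+1)) ∧
        (∀ n, 0 ≤ y n ∧ y n ≤ S) ∧
        (∀ n, x = (∑ i ∈ Finset.range n, ((d i : ℕ):ℝ)/q^(i+1)) + y n / q^n) ∧
        (∀ n, (∀ m, n < m → (d m : ℕ) = 0) → y (n+1) = 0) ∧
        (∀ n, (∀ m, n < m → (d m : ℕ) = M) → y (n+1) = S) := by
    refine ⟨fun n => piQ M q (tail n d), ?_, ?_, ?_, ?_, ?_⟩
    · intro n
      have h := piQ_rec hq1 (tail n d)
      rw [tail_tail] at h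
      have h0 : ((tail n d) 0 : Fin (M+1)) = d n := by simp [tail]
      rw [h0] at h
      exact h
    · intro n
      exact ⟨piQ_nonneg hq1 _, by rw [hS]; exact piQ_le hq1 _⟩
    · intro n; rw [← hd]; exact piQ_partial hq1 d n
    · intro n h
      have ht : tail (n+1) d = (fun _ => (0 : Fin (M+1))) := by
        funext i
        exact Fin.ext (h (i + (n+1)) (by omega))
      show piQ M q (tail (n+1) d) = 0
      rw [ht]
      exact piQ_zero hq1
    · intro n h
      have ht : tail (n+1) d = (fun _ => (⟨M, Nat.lt_succ_self M⟩ : Fin (M+1))) := by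
        funext i
        exact Fin.ext (h (i + (n+1)) (by omega))
      show piQ M q (tail (n+1) d) = S
      rw [ht, hS]
      exact piQ_constM hq1
  -- no alternative digit is admissible anywhere
  have halt : ∀ (n : ℕ) (a : Fin (M+1)), a ≠ d n → 0 ≤ q * y n - (a:ℕ) →
      q * y n - (a:ℕ) ≤ S → False := by
    intro n a hne h0 hS'
    rw [hS] at hS'
    obtain ⟨g, hg⟩ := exists_expansion hq1 hqM h0 hS'
    obtain ⟨e, he⟩ : ∃ e : Digits M,
        e = fun i => if i < n then d i else if i = n then a else g (i - (n+1)) := ⟨_, rfl⟩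
    have htail : tail (n+1) e = g := by
      funext i
      have h1 : ¬(i + (n+1) < n) := by omega
      have h2 : ¬(i + (n+1) = n) := by omega
      have h3 : i + (n+1) - (n+1) = i := by omega
      simp only [tail, he, h1, h2, if_false, h3]
    have hsum : ∑ i ∈ Finset.range (n+1), ((e i : ℕ):ℝ)/q^(i+1)
        = (∑ i ∈ Finset.range n, ((d i : ℕ):ℝ)/q^(i+1)) + ((a:ℕ):ℝ)/q^(n+1) := by
      rw [Finset.sum_range_succ]
      congr 1
      · apply Finset.sum_congr rfl
        intro i hi
        have hi' : i < n := Finset.mem_range.1 hi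
        simp [he, hi']
      · simp [he]
    have hkey : ((a:ℕ):ℝ)/q^(n+1) + (q * y n - (a:ℕ))/q^(n+1) = y n / q^n := by
      rw [pow_succ]
      have hqn : q^n ≠ 0 := pow_ne_zero _ (ne_of_gt hq0)
      field_simp
      ring
    have hpe : piQ M q e = x := by
      rw [piQ_partial hq1 e (n+1), htail, hg, hsum]
      have h4 := hpart0 n
      linarith [hkey]
    have hed := hun e hpe
    have hen : e n = a := by simp [he]
    rw [hed] at hen
    exact hne hen.symm
  -- forced digit conditions
  have hF1 : ∀ n, (d n : ℕ) < M → q * y n < ((d n : ℕ):ℝ) + 1 := by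
    intro n h
    by_contra hcon
    push_neg at hcon
    refine halt n ⟨(d n : ℕ) + 1, by omega⟩ ?_ ?_ ?_
    · intro heq
      have hv : (d n : ℕ) + 1 = (d n : ℕ) := congrArg Fin.val heq
      omega
    · show 0 ≤ q * y n - (((d n : ℕ) + 1 : ℕ):ℝ)
      push_cast
      linarith
    · show q * y n - (((d n : ℕ) + 1 : ℕ):ℝ) ≤ S
      push_cast
      have h2 := hyrec n
      have h3 := (hyb (n+1)).2
      linarith
  have hF2 : ∀ n, 0 < (d n : ℕ) → S + ((d n : ℕ):ℝ) - 1 < q * y n := by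
    intro n h
    by_contra hcon
    push_neg at hcon
    refine halt n ⟨(d n : ℕ) - 1, by omega⟩ ?_ ?_ ?_
    · intro heq
      have hv : (d n : ℕ) - 1 = (d n : ℕ) := congrArg Fin.val heq
      omega
    · show 0 ≤ q * y n - (((d n : ℕ) - 1 : ℕ):ℝ)
      have hcast : (((d n : ℕ) - 1 : ℕ):ℝ) = ((d n : ℕ):ℝ) - 1 := by
        have : (1:ℕ) ≤ (d n : ℕ) := h
        push_cast [Nat.cast_sub this]
        ring
      rw [hcast]
      have h2 := hyrec n
      have h3 := (hyb (n+1)).1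
      linarith
    · show q * y n - (((d n : ℕ) - 1 : ℕ):ℝ) ≤ S
      have hcast : (((d n : ℕ) - 1 : ℕ):ℝ) = ((d n : ℕ):ℝ) - 1 := by
        have : (1:ℕ) ≤ (d n : ℕ) := h
        push_cast [Nat.cast_sub this]
        ring
      rw [hcast]
      linarith
  -- middle digits propagate
  have hmid : ∀ n, 0 < (d n : ℕ) → (d n : ℕ) < M →
      (S - 1 < y (n+1) ∧ y (n+1) < 1 ∧ 0 < (d (n+1) : ℕ) ∧ (d (n+1) : ℕ) < M) := by
    intro n h0 h1
    have hf1 := hF1 n h1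
    have hf2 := hF2 n h0
    have hrec := hyrec n
    have hy1 : S - 1 < y (n+1) := by linarith
    have hy2 : y (n+1) < 1 := by linarith
    have hd1 : 0 < (d (n+1) : ℕ) := by
      by_contra hz
      push_neg at hz
      have hz0 : (d (n+1) : ℕ) = 0 := by omega
      have := hF1 (n+1) (by omega)
      rw [hz0] at this
      push_cast at this
      nlinarith
    have hd2 : (d (n+1) : ℕ) < M := by
      by_contra hz
      push_neg at hz
      have hzM : (d (n+1) : ℕ) = M := by
        have := (d (n+1)).isLt; omega
      have := hF2 (n+1) (by omega)
      rw [hzM] at this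
      nlinarith
    exact ⟨hy1, hy2, hd1, hd2⟩
  -- no middle digit ever occurs
  have hnomid : ∀ n, (d n : ℕ) = 0 ∨ (d n : ℕ) = M := by
    by_contra hcon
    push_neg at hcon
    obtain ⟨n, hn0, hnM⟩ := hcon
    have hmn0 : 0 < (d n : ℕ) := by omega
    have hmnM : (d n : ℕ) < M := by have := (d n).isLt; omega
    -- chain of middle digits
    have hchain : ∀ j, (S - 1 < y (n+1+j) ∧ y (n+1+j) < 1 ∧
        0 < (d (n+1+j) : ℕ) ∧ (d (n+1+j) : ℕ) < M) := by
      intro j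
      induction j with
      | zero =>
        have := hmid n hmn0 hmnM
        exact this
      | succ j ih =>
        have h := hmid (n+1+j) ih.2.2.1 ih.2.2.2
        have hidx : n+1+(j+1) = (n+1+j)+1 := by omega
        rw [hidx]
        exact h
    -- all these digits lie in a short interval, hence are equal
    have hdigbound : ∀ j, q*(S-1) - 1 < ((d (n+1+j) : ℕ):ℝ) ∧
        ((d (n+1+j) : ℕ):ℝ) < q - S + 1 := by
      intro j
      obtain ⟨hy1, hy2, hdj0, hdjM⟩ := hchain j
      have hf1 := hF1 (n+1+j) hdjM
      have hf2 := hF2 (n+1+j) hdj0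
      constructor
      · nlinarith only [hf1, hy1, hq0, mul_pos hq0 (sub_pos.2 hy1)]
      · have h5 : q * y (n+1+j) < q * 1 := mul_lt_mul_of_pos_left hy2 hq0
        linarith only [hf2, h5]
    obtain ⟨c, hc⟩ : ∃ c : ℕ, c = (d (n+1) : ℕ) := ⟨_, rfl⟩
    have hconst : ∀ j, (d (n+1+j) : ℕ) = c := by
      intro j
      have h1 := hdigbound j
      have h2 := hdigbound 0
      have e1 : ((d (n+1+j) : ℕ):ℝ) < (c:ℝ) + 1 := by
        rw [hc]; push_cast
        nlinarith only [h1.2, h2.1, hB]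
      have e2 : ((c:ℝ)) < ((d (n+1+j) : ℕ):ℝ) + 1 := by
        rw [hc]; push_cast
        nlinarith only [h2.2, h1.1, hB]
      have e1' : (d (n+1+j) : ℕ) < c + 1 := by exact_mod_cast e1
      have e2' : c < (d (n+1+j) : ℕ) + 1 := by exact_mod_cast e2
      omega
    have hc0 : 0 < c := by
      have h := (hchain 0).2.2.1
      rw [hconst 0] at h; exact h
    have hcM : c < M := by
      have h := (hchain 0).2.2.2
      rw [hconst 0] at h; exact h
    -- the fixed point p = c/(q-1) is not in (S-1, 1)
    have hp := ineqC c hc0 hcM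
    push_neg at hp
    obtain ⟨p, hpdef⟩ : ∃ p : ℝ, p = (c:ℝ)/(q-1) := ⟨_, rfl⟩
    have hqp : q * p - (c:ℝ) = p := by rw [hpdef]; field_simp; ring
    have hgrow : ∀ j, y (n+1+j) - p = q^j * (y (n+1) - p) := by
      intro j
      induction j with
      | zero => simp
      | succ j ih =>
        have hidx : n+1+(j+1) = (n+1+j)+1 := by omega
        have hrec := hyrec (n+1+j)
        rw [hconst j] at hrec
        rw [hidx]
        rw [pow_succ]
        linear_combination q * ih + hqp - hrec
    obtain ⟨hy1, hy2, _, _⟩ := hchain 0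
    have hcases : (c:ℝ) ≤ (M:ℝ) - q + 1 ∨ q - 1 ≤ (c:ℝ) := by
      by_contra hno
      push_neg at hno
      exact absurd (hp hno.1) (not_le.2 hno.2)
    rcases hcases with hcc | hcc
    · -- p ≤ S - 1 < y (n+1) : orbit grows upward, but y < 1
      have hpS : p ≤ S - 1 := by
        rw [hpdef, hS, div_sub' (ne_of_gt hq1'), div_le_div_iff_of_pos_right hq1']
        linarith
      have hε : 0 < y (n+1) - p := by linarith
      obtain ⟨j, hj⟩ := pow_unbounded_of_one_lt ((1 - p)/(y (n+1) - p)) hq1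
      have h1 := hgrow j
      have h2 := (hchain j).2.1
      rw [div_lt_iff₀ hε] at hj
      linarith only [hj, h1, h2]
    · -- 1 ≤ p, y < 1 : orbit grows downward, but y > S - 1
      have hpS : 1 ≤ p := by
        rw [hpdef, le_div_iff₀ hq1']
        linarith
      have hε : 0 < p - y (n+1) := by linarith
      obtain ⟨j, hj⟩ := pow_unbounded_of_one_lt ((p - (S-1))/(p - y (n+1))) hq1
      have h1 := hgrow j
      have h1' : p - y (n+1+j) = q^j * (p - y (n+1)) := by linear_combination -h1
      have h2 := (hchain j).1
      rw [div_lt_iff₀ hε] at hj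
      linarith only [hj, h1', h2]
  -- not eventually all zero
  have hnotall0 : ∀ N, ∃ m, N ≤ m ∧ (d m : ℕ) ≠ 0 := by
    intro N
    by_contra hcon
    push_neg at hcon
    rcases Classical.em (∀ m, (d m : ℕ) = 0) with hall | hall
    · have : d = (fun _ => (0 : Fin (M+1))) := by
        funext i; exact Fin.ext (hall i)
      rw [this, piQ_zero hq1] at hd
      linarith
    · push_neg at hall
      obtain ⟨m₀, hm₀⟩ := hall
      have hm₀N : m₀ < N := by
        by_contra h'
        push_neg at h'
        exact hm₀ (hcon m₀ h')
      obtain ⟨n, hn⟩ : ∃ n, n = Nat.findGreatest (fun m => (d m : ℕ) ≠ 0) N := ⟨_, rfl⟩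
      have hspec : (d n : ℕ) ≠ 0 := by
        rw [hn]
        exact Nat.findGreatest_spec (P := fun m => (d m : ℕ) ≠ 0) (m := m₀) (by omega) hm₀
      have hgt : ∀ m, n < m → (d m : ℕ) = 0 := by
        intro m hm
        rcases le_or_gt m N with h' | h'
        · by_contra h''
          exact Nat.findGreatest_is_greatest (P := fun m => (d m : ℕ) ≠ 0)
            (by rw [← hn]; exact hm) h' h''
        · exact hcon m (le_of_lt h')
      have hyz : y (n+1) = 0 := hyzero n hgt
      have hf2 := hF2 n (by omega)
      have hrec := hyrec n
      rw [hyz] at hrec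
      have : q * y n = ((d n : ℕ):ℝ) := by linarith
      rw [this] at hf2
      linarith
  -- not eventually all M
  have hnotallM : ∀ N, ∃ m, N ≤ m ∧ (d m : ℕ) ≠ M := by
    intro N
    by_contra hcon
    push_neg at hcon
    rcases Classical.em (∀ m, (d m : ℕ) = M) with hall | hall
    · have : d = (fun _ => (⟨M, Nat.lt_succ_self M⟩ : Fin (M+1))) := by
        funext i; exact Fin.ext (hall i)
      rw [this, piQ_constM hq1] at hd
      linarith
    · push_neg at hall
      obtain ⟨m₀, hm₀⟩ := hall
      have hm₀N : m₀ < N := by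
        by_contra h'
        push_neg at h'
        exact hm₀ (hcon m₀ h')
      obtain ⟨n, hn⟩ : ∃ n, n = Nat.findGreatest (fun m => (d m : ℕ) ≠ M) N := ⟨_, rfl⟩
      have hspec : (d n : ℕ) ≠ M := by
        rw [hn]
        exact Nat.findGreatest_spec (P := fun m => (d m : ℕ) ≠ M) (m := m₀) (by omega) hm₀
      have hgt : ∀ m, n < m → (d m : ℕ) = M := by
        intro m hm
        rcases le_or_gt m N with h' | h'
        · by_contra h''
          exact Nat.findGreatest_is_greatest (P := fun m => (d m : ℕ) ≠ M)
            (by rw [← hn]; exact hm) h' h''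
        · exact hcon m (le_of_lt h')
      have hyS : y (n+1) = S := hyconst n hgt
      have hf1 := hF1 n (by have := (d n).isLt; omega)
      have hrec := hyrec n
      rw [hyS] at hrec
      linarith
  -- get a pattern M followed by 0 : contradiction
  obtain ⟨m, _, hm⟩ := hnotall0 0
  have hmM : (d m : ℕ) = M := by
    rcases hnomid m with h | h
    · omega
    · exact h
  obtain ⟨m', hm'ge, hm'⟩ := hnotallM (m+1)
  have hm'0 : (d m' : ℕ) = 0 := by
    rcases hnomid m' with h | h
    · exact h
    · omega
  have hP : ∃ j, (d (m+1+j) : ℕ) = 0 := ⟨m' - (m+1), by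
    rw [show m+1+(m'-(m+1)) = m' by omega]; exact hm'0⟩
  obtain ⟨j₀, hj₀⟩ : ∃ j₀, j₀ = Nat.find hP := ⟨_, rfl⟩
  have hfind : (d (m+1+j₀) : ℕ) = 0 := by rw [hj₀]; exact Nat.find_spec hP
  have hprev : (d (m+j₀) : ℕ) = M := by
    rcases Nat.eq_zero_or_pos j₀ with h | h
    · rw [h]; simpa using hmM
    · have hmin : ¬ ((d (m+1+(j₀-1)) : ℕ) = 0) :=
        Nat.find_min hP (show j₀ - 1 < Nat.find hP by rw [← hj₀]; omega)
      rw [show m+1+(j₀-1) = m+j₀ by omega] at hmin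
      rcases hnomid (m+j₀) with h' | h'
      · exact absurd h' hmin
      · exact h'
  obtain ⟨n', hn'⟩ : ∃ n', n' = m + j₀ := ⟨_, rfl⟩
  rw [← hn'] at hprev
  rw [show m+1+j₀ = n'+1 by omega] at hfind
  -- conditions at n' and n'+1
  have hf2 := hF2 n' (by omega)
  rw [hprev] at hf2
  have hrec := hyrec n'
  rw [hprev] at hrec
  have hy1 : S - 1 < y (n'+1) := by linarith
  have hf1 := hF1 (n'+1) (by omega)
  rw [hfind] at hf1
  push_cast at hf1
  nlinarith

end Aux

/-- For every `x ≥ x_G`, the set `𝒰(x)` is the singleton `{q_x}`. -/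
theorem Ubases_singleton_of_xG_le (M : ℕ) (hM : 0 < M) (x : ℝ) (hx : xG M ≤ x) :
    Ubases M x = {qx M x} := by
  have hM' : (0:ℝ) < M := by exact_mod_cast hM
  have hxG1 : 1 < xG M := xG_gt_one hM
  have hqG1 : 1 < qG M := qG_gt_one hM
  have hqGM : qG M < M + 1 := qG_lt_M1 hM
  have hx1 : 1 < x := lt_of_lt_of_le hxG1 hx
  have hx0 : 0 < x := by linarith
  have hMx : (M:ℝ)/x ≤ M := by
    rw [div_le_iff₀ hx0]; nlinarith
  have hqxval : qx M x = 1 + (M:ℝ)/x := by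
    apply min_eq_right
    linarith
  have hq₀1 : 1 < 1 + (M:ℝ)/x := by
    have : 0 < (M:ℝ)/x := div_pos hM' hx0
    linarith
  have hxval : (M:ℝ)/(1 + (M:ℝ)/x - 1) = x := by
    rw [add_sub_cancel_left, div_div_eq_mul_div, mul_comm, mul_div_assoc,
      div_self (ne_of_gt hM'), mul_one]
  have hq₀G : 1 + (M:ℝ)/x ≤ qG M := by
    have hxG0 : 0 < xG M := by linarith
    have h1 : (M:ℝ)/x ≤ (M:ℝ)/(xG M) := by
      rw [div_le_div_iff₀ hx0 hxG0]; nlinarith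
    have h2 : (M:ℝ)/(xG M) = qG M - 1 := by
      rw [xG, div_div_eq_mul_div, mul_comm, mul_div_assoc,
        div_self (ne_of_gt hM'), mul_one]
    linarith
  rw [hqxval]
  ext q
  simp only [Ubases, Set.mem_setOf_eq, Set.mem_singleton_iff, Set.mem_Ioc]
  constructor
  · rintro ⟨⟨hq1, hqM1⟩, hUq⟩
    obtain ⟨d, hd, -⟩ := id hUq
    have hxle : x ≤ (M:ℝ)/(q-1) := hd ▸ piQ_le hq1 d
    by_contra hne
    have hqle : q ≤ 1 + (M:ℝ)/x := by
      have h3 : x * (q-1) ≤ M := (le_div_iff₀ (by linarith)).1 hxle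
      have h4 : q - 1 ≤ (M:ℝ)/x := by
        rw [le_div_iff₀ hx0]; nlinarith
      linarith
    have hqlt : q < 1 + (M:ℝ)/x := lt_of_le_of_ne hqle hne
    have hxlt : x < (M:ℝ)/(q-1) := by
      rw [lt_div_iff₀ (by linarith)]
      have h5 : q - 1 < (M:ℝ)/x := by linarith
      calc x * (q-1) < x * ((M:ℝ)/x) := by
            exact mul_lt_mul_of_pos_left h5 hx0
        _ = M := by field_simp
    exact absurd hUq (no_unique_expansion hM hq1 (lt_of_lt_of_le hqlt hq₀G) hx0 hxlt)
  · rintro rfl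
    refine ⟨⟨hq₀1, by linarith⟩, ?_⟩
    refine ⟨fun _ => (⟨M, Nat.lt_succ_self M⟩ : Fin (M+1)), ?_, ?_⟩
    · show piQ M (1+(M:ℝ)/x) _ = x
      rw [piQ_constM hq₀1, hxval]
    · intro e he
      have hall : ∀ i, e i = (⟨M, Nat.lt_succ_self M⟩ : Fin (M+1)) := by
        intro i
        by_contra hnei
        have hlt : (e i : ℕ) < M := by
          have h1 := (e i).isLt
          have h2 : (e i : ℕ) ≠ M := fun h => hnei (Fin.ext h)
          omega
        have h3 := piQ_lt_constM hq₀1 e i hlt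
        rw [hxval] at h3
        rw [he] at h3
        exact lt_irrefl _ h3
      funext i
      exact hall i

end Expansions
end

section
/- Let (τ_i)_{i≥0} = 0110100110010110… be the Thue–Morse sequence over {0,1} (τ_i equals the parity of the number of 1's in the binary expansion of i). Then for every integer n ≥ 0: (i) the word τ_{2^n+1}…τ_{2^{n+1}} equals the bitwise complement of the word τ₁…τ_{2^n} with its last digit increased by 1; and (ii) for every integer i with 0 ≤ i < 2^n, the strict and non-strict lexicographic inequalities complement(τ₁…τ_{2^n−i}) ≺ τ_{i+1}…τ_{2^n} ≼ τ₁…τ_{2^n−i} hold, where complement(w) replaces each digit c of w by 1−c. -/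
open scoped ENNReal NNReal Classical

namespace Expansions

/-- The word `τ_a τ_{a+1} … τ_{a+len-1}`. -/
def tmWord (a len : ℕ) : List ℕ := List.ofFn (fun j : Fin len => tm (a + j))

/-- Bitwise complement of a word over `{0,1}`. -/
def wordCompl (w : List ℕ) : List ℕ := w.map (fun c => 1 - c)

/-- The word with its last digit increased by `1`. -/
def wordPlus (w : List ℕ) : List ℕ := w.dropLast ++ [w.getLastD 0 + 1]

lemma tm_le_one (i : ℕ) : tm i ≤ 1 := Nat.lt_succ_iff.mp (Nat.mod_lt _ (by norm_num))

lemma tm_two_mul (i : ℕ) : tm (2 * i) = tm i := by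
  rcases Nat.eq_zero_or_pos i with h | h
  · simp [h]
  · unfold tm
    rw [Nat.digits_def' (by norm_num : 1 < 2) (by omega : 0 < 2 * i)]
    simp [Nat.mul_div_cancel_left _ (by norm_num : (0:ℕ) < 2)]

lemma tm_two_mul_add_one (i : ℕ) : tm (2 * i + 1) = 1 - tm i := by
  unfold tm
  rw [Nat.digits_def' (by norm_num : 1 < 2) (by omega : 0 < 2 * i + 1)]
  have h1 : (2 * i + 1) % 2 = 1 := by omega
  have h2 : (2 * i + 1) / 2 = i := by omega
  rw [h1, h2]
  simp only [List.sum_cons]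
  omega

lemma tm_pow_add : ∀ (n k : ℕ), k < 2 ^ n → tm (2 ^ n + k) = 1 - tm k := by
  intro n
  induction n with
  | zero =>
    intro k hk
    have hk0 : k = 0 := by omega
    subst hk0
    simpa using tm_two_mul_add_one 0
  | succ n ih =>
    intro k hk
    have hp : 2 ^ (n + 1) = 2 ^ n + 2 ^ n := by rw [pow_succ]; omega
    rcases Nat.even_or_odd k with ⟨l, hl⟩ | ⟨l, hl⟩
    · have e : 2 ^ (n+1) + k = 2 * (2 ^ n + l) := by omega
      rw [e, tm_two_mul, ih l (by omega), hl]
      have e2 : l + l = 2 * l := by omega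
      rw [e2, tm_two_mul]
    · have e : 2 ^ (n+1) + k = 2 * (2 ^ n + l) + 1 := by omega
      rw [e, tm_two_mul_add_one, ih l (by omega), hl, tm_two_mul_add_one]

lemma tm_pow (n : ℕ) : tm (2 ^ n) = 1 := by
  have h := tm_pow_add n 0 (Nat.pow_pos (by norm_num : 0 < 2))
  simpa [show tm 0 = 0 by simp [tm]] using h
lemma tm_core : ∀ n : ℕ, ∀ i < 2 ^ n,
    (∃ j < 2 ^ n - i, (∀ k < j, tm (i + 1 + k) = 1 - tm (1 + k)) ∧
      1 - tm (1 + j) < tm (i + 1 + j)) ∧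
    ((∀ k < 2 ^ n - i, tm (i + 1 + k) = tm (1 + k)) ∨
      ∃ j < 2 ^ n - i, (∀ k < j, tm (i + 1 + k) = tm (1 + k)) ∧
        tm (i + 1 + j) < tm (1 + j)) := by
  intro n
  induction n with
  | zero =>
    intro i hi
    have hi0 : i = 0 := by omega
    subst hi0
    have t1 : tm 1 = 1 := by simpa using tm_pow 0
    constructor
    · refine ⟨0, by norm_num, fun k hk => absurd hk (by omega), ?_⟩
      have e : tm (0 + 1 + 0) = 1 := by norm_num [t1]
      have e2 : tm (1 + 0) = 1 := by norm_num [t1]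
      omega
    · exact Or.inl fun k _ => by norm_num
  | succ n ih =>
    intro i hi
    have hp : 2 ^ (n + 1) = 2 ^ n + 2 ^ n := by rw [pow_succ]; omega
    have hpos : 0 < 2 ^ n := Nat.pow_pos (by norm_num : 0 < 2)
    have t1 : tm 1 = 1 := by simpa using tm_pow 0
    rcases Nat.eq_zero_or_pos i with hi0 | hip
    · subst hi0
      constructor
      · refine ⟨0, by omega, fun k hk => absurd hk (by omega), ?_⟩
        have e : tm (0 + 1 + 0) = 1 := by norm_num [t1]
        have e2 : tm (1 + 0) = 1 := by norm_num [t1]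
        omega
      · exact Or.inl fun k _ => by norm_num
    rcases le_or_gt (2 ^ n) i with hge | hlt
    · -- i = 2^n + i'
      set i' := i - 2 ^ n with hi'def
      have hi' : i' < 2 ^ n := by omega
      have hiq : i = 2 ^ n + i' := by omega
      obtain ⟨IHA, IHB⟩ := ih i' hi'
      have key : ∀ k, i' + 1 + k < 2 ^ n → tm (i + 1 + k) = 1 - tm (i' + 1 + k) := by
        intro k hk
        have e : i + 1 + k = 2 ^ n + (i' + 1 + k) := by omega
        rw [e, tm_pow_add n _ hk]
      have keyLast : tm (i + 1 + (2 ^ n - i' - 1)) = 1 := by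
        have e : i + 1 + (2 ^ n - i' - 1) = 2 ^ (n + 1) := by omega
        rw [e, tm_pow]
      have hlastv : tm (2 ^ n) = 1 := tm_pow n
      constructor
      · -- A from IHB
        rcases IHB with heq | ⟨j, hj, hpre, hjlt⟩
        · refine ⟨2 ^ n - i' - 1, by omega, ?_, ?_⟩
          · intro k hk
            rw [key k (by omega), heq k (by omega)]
          · have h1 := keyLast
            have h2 : tm (i' + 1 + (2 ^ n - i' - 1)) = tm (1 + (2 ^ n - i' - 1)) :=
              heq _ (by omega)
            have h3 : tm (i' + 1 + (2 ^ n - i' - 1)) = tm (2 ^ n) := by congr 1; omega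
            omega
        · have hj1 : tm (1 + j) = 1 ∧ tm (i' + 1 + j) = 0 := by
            have := tm_le_one (1 + j); have := tm_le_one (i' + 1 + j); omega
          refine ⟨j, by omega, ?_, ?_⟩
          · intro k hk
            rw [key k (by omega), hpre k hk]
          · rcases eq_or_lt_of_le (by omega : j ≤ 2 ^ n - i' - 1) with hje | hjl
            · have h1 : tm (i + 1 + j) = 1 := by rw [hje]; exact keyLast
              omega
            · have := key j (by omega)
              omega
      · -- B from IHA
        obtain ⟨j, hj, hpre, hjlt⟩ := IHA
        have hj1 : tm (1 + j) = 1 ∧ tm (i' + 1 + j) = 1 := by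
          have := tm_le_one (1 + j); have := tm_le_one (i' + 1 + j); omega
        rcases eq_or_lt_of_le (by omega : j ≤ 2 ^ n - i' - 1) with hje | hjl
        · -- equality branch
          refine Or.inl fun k hk => ?_
          rcases lt_or_ge k j with hkj | hkj
          · have h1 := key k (by omega)
            have h2 := hpre k hkj
            have := tm_le_one (1 + k)
            omega
          · have hkj' : k = j := by omega
            have h1 : tm (i + 1 + k) = 1 := by rw [hkj', hje]; exact keyLast
            have h2 : tm (1 + k) = 1 := by rw [hkj']; exact hj1.1
            omega
        · refine Or.inr ⟨j, by omega, fun k hk => ?_, ?_⟩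
          · have h1 := key k (by omega)
            have h2 := hpre k hk
            have := tm_le_one (1 + k)
            omega
          · have := key j (by omega)
            omega
    · -- 0 < i < 2^n
      obtain ⟨IHA, IHB⟩ := ih i hlt
      constructor
      · obtain ⟨j, hj, hpre, hjlt⟩ := IHA
        exact ⟨j, by omega, hpre, hjlt⟩
      · rcases IHB with heq | ⟨j, hj, hpre, hjlt⟩
        · -- use IHA at i'' = 2^n - i
          obtain ⟨j, hj, hpre2, hjlt2⟩ := (ih (2 ^ n - i) (by omega)).1
          have hji : j < i := by omega
          have hj1 : tm (1 + j) = 1 ∧ tm (2 ^ n - i + 1 + j) = 1 := by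
            have := tm_le_one (1 + j); have := tm_le_one (2 ^ n - i + 1 + j); omega
          refine Or.inr ⟨2 ^ n - i + j, by omega, fun k hk => ?_, ?_⟩
          · rcases lt_or_ge k (2 ^ n - i) with hki | hki
            · exact heq k hki
            · have e : i + 1 + k = 2 ^ n + (1 + (k - (2 ^ n - i))) := by omega
              have hk2 : 1 + (k - (2 ^ n - i)) < 2 ^ n := by omega
              rw [e, tm_pow_add n _ hk2]
              have h2 := hpre2 (k - (2 ^ n - i)) (by omega)
              have e2 : tm (2 ^ n - i + 1 + (k - (2 ^ n - i))) = tm (1 + k) := by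
                congr 1; omega
              omega
          · have e : i + 1 + (2 ^ n - i + j) = 2 ^ n + (1 + j) := by omega
            rw [e, tm_pow_add n _ (by omega)]
            have e2 : tm (1 + (2 ^ n - i + j)) = tm (2 ^ n - i + 1 + j) := by
              congr 1; omega
            omega
        · exact Or.inr ⟨j, by omega, hpre, hjlt⟩

lemma lex_cons_inv {a b : ℕ} {l m : List ℕ} (h : List.Lex (· < ·) (a :: l) (b :: m)) :
    a < b ∨ (a = b ∧ List.Lex (· < ·) l m) := by
  cases h with
  | rel h => exact Or.inl h
  | cons h => exact Or.inr ⟨rfl, h⟩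

lemma lex_ofFn_of_exists : ∀ (L : ℕ) (f g : ℕ → ℕ) (j : ℕ), j < L →
    (∀ k < j, f k = g k) → f j < g j →
    List.Lex (· < ·) (List.ofFn fun i : Fin L => f i) (List.ofFn fun i : Fin L => g i) := by
  intro L
  induction L with
  | zero => intro f g j hj _ _; omega
  | succ L ih =>
    intro f g j hj hpre hlt
    rw [List.ofFn_succ, List.ofFn_succ]
    cases j with
    | zero => exact List.Lex.rel hlt
    | succ j =>
      have h0 : f ((0 : Fin (L + 1)) : ℕ) = g ((0 : Fin (L + 1)) : ℕ) := hpre 0 (by simp)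
      rw [h0]
      exact List.Lex.cons (ih (fun k => f (k + 1)) (fun k => g (k + 1)) j (by omega)
        (fun k hk => hpre (k + 1) (by omega)) hlt)

lemma exists_of_lex_ofFn : ∀ (L : ℕ) (f g : ℕ → ℕ),
    List.Lex (· < ·) (List.ofFn fun i : Fin L => f i) (List.ofFn fun i : Fin L => g i) →
    ∃ j < L, (∀ k < j, f k = g k) ∧ f j < g j := by
  intro L
  induction L with
  | zero =>
    intro f g h
    rw [List.ofFn_zero, List.ofFn_zero] at h
    cases h
  | succ L ih =>
    intro f g h
    rw [List.ofFn_succ, List.ofFn_succ] at h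
    rcases lex_cons_inv h with h0 | ⟨h0, htail⟩
    · exact ⟨0, by omega, fun k hk => absurd hk (by omega), h0⟩
    · obtain ⟨j, hj, hpre, hlt⟩ := ih (fun k => f (k + 1)) (fun k => g (k + 1)) htail
      refine ⟨j + 1, by omega, ?_, hlt⟩
      intro k hk
      cases k with
      | zero => exact h0
      | succ k => exact hpre k (by omega)

lemma wordCompl_tmWord (L : ℕ) :
    wordCompl (tmWord 1 L) = List.ofFn fun j : Fin L => 1 - tm (1 + (j : ℕ)) := by
  unfold wordCompl tmWord
  rw [List.map_ofFn]
  rfl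

lemma tm_part1 (n : ℕ) :
    tmWord (2 ^ n + 1) (2 ^ n) = wordPlus (wordCompl (tmWord 1 (2 ^ n))) := by
  have hpos : 0 < 2 ^ n := Nat.pow_pos (by norm_num : 0 < 2)
  obtain ⟨m, hm⟩ : ∃ m, 2 ^ n = m + 1 := ⟨2 ^ n - 1, by omega⟩
  rw [wordCompl_tmWord]
  unfold tmWord wordPlus
  rw [hm, List.ofFn_succ', List.ofFn_succ', List.concat_eq_append, List.concat_eq_append,
    List.dropLast_concat, List.getLastD_concat]
  have htm1 : tm (m + 1) = 1 := by rw [← hm]; exact tm_pow n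
  have hpa : ∀ x, x < m + 1 → tm (m + 1 + x) = 1 - tm x := by
    intro x hx
    rw [← hm]
    exact tm_pow_add n x (by omega)
  have hlast1 : tm (m + 1 + 1 + ((Fin.last m : Fin (m + 1)) : ℕ)) = 1 := by
    have e : m + 1 + 1 + ((Fin.last m : Fin (m + 1)) : ℕ) = 2 * (m + 1) := by
      simp [Fin.val_last]; omega
    rw [e, tm_two_mul, htm1]
  have hlast2 : 1 - tm (1 + ((Fin.last m : Fin (m + 1)) : ℕ)) = 0 := by
    have e : 1 + ((Fin.last m : Fin (m + 1)) : ℕ) = m + 1 := by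
      simp [Fin.val_last]; omega
    rw [e, htm1]
  rw [hlast1, hlast2]
  congr 1
  refine congrArg List.ofFn (funext fun i => ?_)
  have hk : 1 + ((i.castSucc : Fin (m + 1)) : ℕ) < m + 1 := by
    have := i.isLt
    simp [Fin.coe_castSucc]
    omega
  have e : m + 1 + 1 + ((i.castSucc : Fin (m + 1)) : ℕ) =
      m + 1 + (1 + ((i.castSucc : Fin (m + 1)) : ℕ)) := by omega
  rw [e, hpa _ hk]


/-- Lemma (Thue–Morse): for every `n ≥ 0`,
(i) `τ_{2^n+1}…τ_{2^{n+1}} = complement(τ₁…τ_{2^n})⁺`, and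
(ii) for `0 ≤ i < 2^n`,
`complement(τ₁…τ_{2^n-i}) ≺ τ_{i+1}…τ_{2^n} ≼ τ₁…τ_{2^n-i}` lexicographically. -/
theorem thueMorse_lex (n : ℕ) :
    tmWord (2 ^ n + 1) (2 ^ n) = wordPlus (wordCompl (tmWord 1 (2 ^ n))) ∧
    ∀ i < 2 ^ n,
      List.Lex (· < ·) (wordCompl (tmWord 1 (2 ^ n - i))) (tmWord (i + 1) (2 ^ n - i)) ∧
      (tmWord (i + 1) (2 ^ n - i) = tmWord 1 (2 ^ n - i) ∨
        List.Lex (· < ·) (tmWord (i + 1) (2 ^ n - i)) (tmWord 1 (2 ^ n - i))) := by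
  refine ⟨tm_part1 n, ?_⟩
  intro i hi
  obtain ⟨hA, hB⟩ := tm_core n i hi
  constructor
  · rw [wordCompl_tmWord]
    unfold tmWord
    obtain ⟨j, hj, hpre, hlt⟩ := hA
    exact lex_ofFn_of_exists _ (fun k => 1 - tm (1 + k)) (fun k => tm (i + 1 + k)) j hj
      (fun k hk => (hpre k hk).symm) hlt
  · rcases hB with heq | ⟨j, hj, hpre, hlt⟩
    · left
      unfold tmWord
      congr 1
      funext k
      exact heq k k.isLt
    · right
      unfold tmWord
      exact lex_ofFn_of_exists _ (fun k => tm (i + 1 + k)) (fun k => tm (1 + k)) j hj hpre hlt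


end Expansions
end
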